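/- Let L = ℤB₁ ⊕ ⋯ ⊕ ℤB_k ⊆ M_n(ℂ) be a matrix lattice of rank k, and fix real numbers r > 0 and n ≥ 1. Then the total power of the scaled code ρ^{1/2 − rn/k}·L(ρ^{rn/k}) satisfies lim_{ρ→∞} log(Σ_{X ∈ L(ρ^{rn/k})} ρ^{1 − 2rn/k}·‖X‖_F²) / log ρ = 1 + rn. -/

import Mathlib

open Filter

/-- The Frobenius norm of a complex matrix. -/
noncomputable def frobNorm {n : ℕ} (X : Matrix (Fin n) (Fin n) ℂ) : ℝ :=
  Real.sqrt (∑ i, ∑ j, Complex.normSq (X i j))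

/-- The matrix lattice `L = ℤB₁ ⊕ ⋯ ⊕ ℤB_k` generated by the matrices `B i`. -/
def latticeOf {α : Type*} [AddCommGroup α] {k : ℕ} (B : Fin k → α) : Set α :=
  {X | ∃ z : Fin k → ℤ, X = ∑ i, z i • B i}

/-- `L(M)`: the nonzero lattice points of Frobenius norm at most `M`. -/
def latticeBall {n k : ℕ} (B : Fin k → Matrix (Fin n) (Fin n) ℂ) (M : ℝ) :
    Set (Matrix (Fin n) (Fin n) ℂ) :=
  {X | X ∈ latticeOf B ∧ frobNorm X ≤ M ∧ X ≠ 0}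

noncomputable def mE (n : ℕ) : Matrix (Fin n) (Fin n) ℂ →ₗ[ℝ] EuclideanSpace ℂ (Fin n × Fin n) where
  toFun X := (WithLp.equiv 2 _).symm fun p => X p.1 p.2
  map_add' _ _ := rfl
  map_smul' _ _ := rfl

lemma frob_eq {n : ℕ} (X : Matrix (Fin n) (Fin n) ℂ) : frobNorm X = ‖mE n X‖ := by
  rw [EuclideanSpace.norm_eq, frobNorm]
  congr 1
  rw [Fintype.sum_prod_type]
  refine Finset.sum_congr rfl fun i _ => Finset.sum_congr rfl fun j _ => ?_
  simp [mE, Complex.sq_norm]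

lemma mE_inj (n : ℕ) : Function.Injective (mE n) := by
  intro X Y h
  ext i j
  have : ((WithLp.equiv 2 _).symm fun p : Fin n × Fin n => X p.1 p.2 : EuclideanSpace ℂ (Fin n × Fin n)) (i, j) = ((WithLp.equiv 2 _).symm fun p : Fin n × Fin n => Y p.1 p.2 : EuclideanSpace ℂ (Fin n × Fin n)) (i, j) := by
    rw [show ((WithLp.equiv 2 _).symm fun p : Fin n × Fin n => X p.1 p.2 : EuclideanSpace ℂ (Fin n × Fin n)) = mE n X from rfl, h]
    rfl
  simpa using this

noncomputable def Tmap {n k : ℕ} (B : Fin k → Matrix (Fin n) (Fin n) ℂ) :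
    (Fin k → ℝ) →ₗ[ℝ] Matrix (Fin n) (Fin n) ℂ where
  toFun c := ∑ i, c i • B i
  map_add' x y := by simp [add_smul, Finset.sum_add_distrib]
  map_smul' c x := by simp [smul_smul, Finset.smul_sum]

lemma Tmap_inj {n k : ℕ} {B : Fin k → Matrix (Fin n) (Fin n) ℂ}
    (hB : LinearIndependent ℝ B) : Function.Injective ((mE n).comp (Tmap B)) := by
  have hT : Function.Injective (Tmap B) := by
    intro x y h
    have h0 : Tmap B (x - y) = 0 := by rw [map_sub, h, sub_self]
    have := Fintype.linearIndependent_iff.mp hB (x - y) h0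
    funext i
    have := this i
    simpa [sub_eq_zero] using this
  exact (mE_inj n).comp hT

set_option maxHeartbeats 2000000 in
lemma key_bounds {n k : ℕ} (hk : 0 < k) (B : Fin k → Matrix (Fin n) (Fin n) ℂ)
    (hB : LinearIndependent ℝ B) :
    ∃ c₁ > (0:ℝ), ∃ c₂ > (0:ℝ), ∃ M₀ : ℝ, 1 ≤ M₀ ∧ ∀ M : ℝ, M₀ ≤ M →
      (latticeBall B M).Finite ∧
      c₁ * M ^ (k + 2) ≤ (∑ᶠ X ∈ latticeBall B M, frobNorm X ^ 2) ∧
      (∑ᶠ X ∈ latticeBall B M, frobNorm X ^ 2) ≤ c₂ * M ^ (k + 2) := by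
  classical
  set F := (mE n).comp (Tmap B) with hF
  have hFinj : Function.Injective F := Tmap_inj hB
  obtain ⟨K, hK, hlow⟩ : ∃ K : ℝ, 0 < K ∧ ∀ v : Fin k → ℝ, ‖v‖ ≤ K * ‖F v‖ := by
    obtain ⟨K₀, hK₀, hanti⟩ := F.exists_antilipschitzWith (LinearMap.ker_eq_bot.mpr hFinj)
    refine ⟨(K₀ : ℝ), by exact_mod_cast hK₀, fun v => ?_⟩
    have := hanti.le_mul_dist v 0
    simpa [dist_zero_right, map_zero] using this
  obtain ⟨C, hC1, hup⟩ : ∃ C : ℝ, 1 ≤ C ∧ ∀ v : Fin k → ℝ, ‖F v‖ ≤ C * ‖v‖ := by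
    refine ⟨‖LinearMap.toContinuousLinearMap F‖ + 1,
      by linarith [norm_nonneg (LinearMap.toContinuousLinearMap F)], fun v => ?_⟩
    have h := (LinearMap.toContinuousLinearMap F).le_opNorm v
    have hv : (LinearMap.toContinuousLinearMap F) v = F v := rfl
    rw [hv] at h
    nlinarith [norm_nonneg v]
  have hC : (0:ℝ) < C := lt_of_lt_of_le one_pos hC1
  have hCne : C ≠ 0 := ne_of_gt hC
  set φ : (Fin k → ℤ) → Matrix (Fin n) (Fin n) ℂ := fun z => ∑ i, z i • B i with hφdef
  set cst : (Fin k → ℤ) → (Fin k → ℝ) := fun z i => (z i : ℝ) with hcst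
  have hφT : ∀ z, φ z = Tmap B (cst z) := by
    intro z
    simp only [hφdef, Tmap, LinearMap.coe_mk, AddHom.coe_mk, hcst]
    exact Finset.sum_congr rfl fun i _ => (Int.cast_smul_eq_zsmul ℝ (z i) (B i)).symm
  have hfrobφ : ∀ z, frobNorm (φ z) = ‖F (cst z)‖ := by
    intro z
    rw [hφT, frob_eq]
    rfl
  have hcst_inj : Function.Injective cst := by
    intro z w h
    funext i
    have := congrFun h i
    simp only [hcst] at this
    exact_mod_cast this
  have hφinj : Function.Injective φ := by
    intro z w h
    apply hcst_inj
    apply hFinj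
    simp only [hF, LinearMap.comp_apply]
    rw [← hφT, ← hφT]
    exact congrArg (mE n) h
  have hcstnorm : ∀ (z : Fin k → ℤ) (b : ℝ), (∀ i, |(z i : ℝ)| ≤ b) → ‖cst z‖ ≤ b := by
    intro z b hb
    have h0 : 0 ≤ b := le_trans (abs_nonneg _) (hb ⟨0, hk⟩)
    exact (pi_norm_le_iff_of_nonneg h0).mpr fun i => by simpa [Real.norm_eq_abs] using hb i
  -- choose constants
  refine ⟨1 / ((4*C)^(k+2) * K^2), by positivity, (2*K+3)^k, by positivity,
    4*C, by linarith, fun M hM => ?_⟩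
  have hM1 : (1:ℝ) ≤ M := le_trans (by linarith) hM
  have hM0 : (0:ℝ) < M := lt_of_lt_of_le one_pos hM1
  -- finiteness
  set N : ℤ := ⌈K * M⌉ with hN
  have hballsub : latticeBall B M ⊆ φ '' (Set.Icc (fun _ => -N) (fun _ => N)) := by
    rintro X ⟨⟨z, rfl⟩, hXM, hX0⟩
    refine ⟨z, ?_, rfl⟩
    have hn1 : ‖cst z‖ ≤ K * M := by
      calc ‖cst z‖ ≤ K * ‖F (cst z)‖ := hlow _
        _ = K * frobNorm (φ z) := by rw [hfrobφ]
        _ ≤ K * M := by nlinarith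
    constructor <;> intro i
    · simp only [Pi.neg_apply]
      have habs : |(z i : ℝ)| ≤ K * M := le_trans (by simpa [hcst, Real.norm_eq_abs] using norm_le_pi_norm (cst z) i) hn1
      rw [abs_le] at habs
      have : (-(N:ℝ)) ≤ (z i : ℝ) := by
        have h3 := Int.le_ceil (K * M)
        have : -((N:ℤ):ℝ) ≤ -(K*M) := by simpa [hN] using neg_le_neg h3
        linarith [habs.1]
      exact_mod_cast this
    · have habs : |(z i : ℝ)| ≤ K * M := le_trans (by simpa [hcst, Real.norm_eq_abs] using norm_le_pi_norm (cst z) i) hn1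
      have h2 : (z i : ℝ) ≤ (N : ℝ) := le_trans (le_trans (le_abs_self _) habs) (Int.le_ceil _)
      exact_mod_cast h2
  have hfin : (latticeBall B M).Finite :=
    ((Set.finite_Icc _ _).image φ).subset hballsub
  have hfrob_nonneg : ∀ X : Matrix (Fin n) (Fin n) ℂ, 0 ≤ frobNorm X :=
    fun X => Real.sqrt_nonneg _
  have hNnn : (0:ℤ) ≤ N := Int.ceil_nonneg (by positivity)
  rw [finsum_mem_eq_finite_toFinset_sum _ hfin]
  refine ⟨hfin, ?_, ?_⟩
  · -- lower bound
    set N' : ℤ := ⌊M / (2*C)⌋ with hN'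
    have hq1 : (1:ℝ) ≤ M / (4*C) := (one_le_div (by positivity)).mpr hM
    have hN'2 : (2:ℤ) ≤ N' := by
      rw [hN', Int.le_floor]
      push_cast
      rw [le_div_iff₀ (by positivity)]
      linarith
    have hN'r : M / (4*C) ≤ (N' : ℝ) := by
      have h1 : M / (2*C) - 1 < (N' : ℝ) := by
        rw [hN']
        exact_mod_cast Int.sub_one_lt_floor (M / (2*C))
      have h2 : M / (2*C) = 2 * (M / (4*C)) := by field_simp; ring
      linarith
    have hN'pos : (0:ℝ) < (N' : ℝ) := lt_of_lt_of_le (by positivity) hN'r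
    have hN'leM : (N' : ℝ) ≤ M / (2*C) := Int.floor_le _
    set Z₀ : Finset (Fin k → ℤ) := Finset.Icc (fun _ => N') (fun _ => 2*N') with hZ₀
    have hz_bounds : ∀ z ∈ Z₀, (∀ i, N' ≤ z i) ∧ (∀ i, z i ≤ 2*N') := by
      intro z hz
      rw [hZ₀, Finset.mem_Icc] at hz
      exact ⟨fun i => hz.1 i, fun i => hz.2 i⟩
    have hmem : ∀ z ∈ Z₀, φ z ∈ latticeBall B M := by
      intro z hz
      obtain ⟨hz1, hz2⟩ := hz_bounds z hz
      refine ⟨⟨z, rfl⟩, ?_, ?_⟩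
      · rw [hfrobφ]
        have hcz : ‖cst z‖ ≤ 2 * (N' : ℝ) := by
          apply hcstnorm
          intro i
          rw [abs_le]
          constructor
          · have : (0:ℝ) < (z i : ℝ) := lt_of_lt_of_le hN'pos (by exact_mod_cast hz1 i)
            linarith
          · have : (z i : ℝ) ≤ ((2*N' : ℤ) : ℝ) := by exact_mod_cast hz2 i
            push_cast at this
            linarith
        calc ‖F (cst z)‖ ≤ C * ‖cst z‖ := hup _
          _ ≤ C * (2 * (N' : ℝ)) := by nlinarith
          _ ≤ M := by
              rw [le_div_iff₀ (by positivity)] at hN'leM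
              linarith
      · intro h0
        have hz0 : z = 0 := by
          apply hφinj
          rw [h0]
          simp [hφdef]
        have := hz1 ⟨0, hk⟩
        rw [hz0] at this
        simp at this
        omega
    have hlowz : ∀ z ∈ Z₀, (N' : ℝ) / K ≤ frobNorm (φ z) := by
      intro z hz
      obtain ⟨hz1, _⟩ := hz_bounds z hz
      rw [hfrobφ]
      rw [div_le_iff₀ hK]
      have h1 : (N' : ℝ) ≤ ‖cst z‖ := by
        have h2 : ‖cst z ⟨0, hk⟩‖ ≤ ‖cst z‖ := norm_le_pi_norm (cst z) ⟨0, hk⟩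
        have h3 : (N' : ℝ) ≤ (z ⟨0, hk⟩ : ℝ) := by exact_mod_cast hz1 ⟨0, hk⟩
        have h4 : (z ⟨0, hk⟩ : ℝ) ≤ |(z ⟨0, hk⟩ : ℝ)| := le_abs_self _
        simp only [hcst, Real.norm_eq_abs] at h2
        linarith
      calc (N' : ℝ) ≤ ‖cst z‖ := h1
        _ ≤ K * ‖F (cst z)‖ := hlow _
        _ = ‖F (cst z)‖ * K := by ring
    have hsub2 : Z₀.image φ ⊆ hfin.toFinset := by
      intro x hx
      obtain ⟨z, hz, rfl⟩ := Finset.mem_image.mp hx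
      rw [Set.Finite.mem_toFinset]
      exact hmem z hz
    have hcard : ((N' : ℝ))^k ≤ (Z₀.card : ℝ) := by
      have h1 : Z₀.card = ((N' + 1).toNat)^k := by
        rw [hZ₀, Pi.card_Icc]
        simp only [Int.card_Icc]
        rw [Finset.prod_const, Finset.card_univ, Fintype.card_fin]
        congr 1
        omega
      rw [h1]
      push_cast
      have h2 : (N' : ℝ) ≤ ((N' + 1).toNat : ℝ) := by
        have : ((N' + 1).toNat : ℤ) = N' + 1 := Int.toNat_of_nonneg (by omega)
        have h3 : (((N' + 1).toNat : ℤ) : ℝ) = ((N' : ℝ) + 1) := by rw [this]; push_cast; ring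
        push_cast at h3
        linarith
      exact pow_le_pow_left₀ (le_of_lt hN'pos) h2 k
    calc 1 / ((4*C)^(k+2) * K^2) * M ^ (k+2)
        = (M / (4*C))^(k+2) / K^2 := by
          rw [div_pow]
          field_simp
      _ ≤ (N' : ℝ)^(k+2) / K^2 := by gcongr <;> positivity
      _ = (N' : ℝ)^k * ((N' : ℝ) / K)^2 := by
          rw [div_pow, pow_add]
          field_simp
      _ ≤ (Z₀.card : ℝ) * ((N' : ℝ) / K)^2 := by gcongr <;> positivity
      _ ≤ ∑ z ∈ Z₀, frobNorm (φ z) ^ 2 := by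
          have := Finset.card_nsmul_le_sum Z₀ (fun z => frobNorm (φ z) ^ 2)
            (((N' : ℝ) / K)^2) (fun z hz => by
              have h1 := hlowz z hz
              have h2 : (0:ℝ) ≤ (N' : ℝ) / K := by positivity
              exact pow_le_pow_left₀ h2 h1 2)
          simpa [nsmul_eq_mul] using this
      _ = ∑ x ∈ Z₀.image φ, frobNorm x ^ 2 := by
          rw [Finset.sum_image (fun z _ w _ h => hφinj h)]
      _ ≤ ∑ x ∈ hfin.toFinset, frobNorm x ^ 2 :=
          Finset.sum_le_sum_of_subset_of_nonneg hsub2 fun _ _ _ => sq_nonneg _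
  · -- upper bound
    have hsub3 : hfin.toFinset ⊆ (Finset.Icc (fun _ : Fin k => -N) (fun _ => N)).image φ := by
      intro x hx
      rw [Set.Finite.mem_toFinset] at hx
      obtain ⟨z, hz, rfl⟩ := hballsub hx
      exact Finset.mem_image.mpr ⟨z, Finset.mem_Icc.mpr ⟨fun i => hz.1 i, fun i => hz.2 i⟩, rfl⟩
    have hcard2 : (hfin.toFinset.card : ℝ) ≤ ((2*K+3) * M)^k := by
      have h1 : hfin.toFinset.card ≤ ((2*N+1).toNat)^k := by
        calc hfin.toFinset.card ≤ ((Finset.Icc (fun _ : Fin k => -N) (fun _ => N)).image φ).card :=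
              Finset.card_le_card hsub3
          _ ≤ (Finset.Icc (fun _ : Fin k => -N) (fun _ => N)).card := Finset.card_image_le
          _ = ((2*N+1).toNat)^k := by
              rw [Pi.card_Icc]
              simp only [Int.card_Icc]
              rw [Finset.prod_const, Finset.card_univ, Fintype.card_fin]
              congr 1
              omega
      have h2 : (((2*N+1).toNat : ℝ)) ≤ (2*K+3) * M := by
        have h3 : ((2*N+1).toNat : ℤ) = 2*N+1 := Int.toNat_of_nonneg (by omega)
        have h4 : (N : ℝ) < K * M + 1 := by
          calc (N : ℝ) = (⌈K * M⌉ : ℝ) := by rw [hN]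
            _ < K * M + 1 := Int.ceil_lt_add_one _
        have h5 : (((2*N+1).toNat : ℤ) : ℝ) = 2*(N:ℝ)+1 := by rw [h3]; push_cast; ring
        push_cast at h5
        nlinarith
      calc (hfin.toFinset.card : ℝ) ≤ (((2*N+1).toNat)^k : ℕ) := by exact_mod_cast h1
        _ = (((2*N+1).toNat : ℝ))^k := by push_cast; ring
        _ ≤ ((2*K+3) * M)^k := pow_le_pow_left₀ (by positivity) h2 k
    have hsum : (∑ x ∈ hfin.toFinset, frobNorm x ^ 2) ≤ (hfin.toFinset.card : ℝ) * M^2 := by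
      have := Finset.sum_le_card_nsmul hfin.toFinset (fun x => frobNorm x ^ 2) (M^2)
        (fun x hx => by
          rw [Set.Finite.mem_toFinset] at hx
          exact pow_le_pow_left₀ (hfrob_nonneg x) hx.2.1 2)
      simpa [nsmul_eq_mul] using this
    calc (∑ x ∈ hfin.toFinset, frobNorm x ^ 2) ≤ (hfin.toFinset.card : ℝ) * M^2 := hsum
      _ ≤ ((2*K+3) * M)^k * M^2 := by
          have : (0:ℝ) ≤ M^2 := sq_nonneg _
          nlinarith [hcard2, sq_nonneg M]
      _ = (2*K+3)^k * M^(k+2) := by rw [mul_pow, pow_add]; ring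

/-- The total power of the scaled code `ρ^(1/2 - rn/k)·L(ρ^(rn/k))` satisfies
`lim_{ρ→∞} log(Σ_{X ∈ L(ρ^(rn/k))} ρ^(1-2rn/k)·‖X‖_F²) / log ρ = 1 + rn`. -/
theorem scaled_code_power (n k : ℕ) (hn : 1 ≤ n) (hk : 0 < k)
    (B : Fin k → Matrix (Fin n) (Fin n) ℂ) (hB : LinearIndependent ℝ B)
    (r : ℝ) (hr : 0 < r) :
    Tendsto
      (fun ρ : ℝ =>
        Real.log (∑ᶠ X ∈ latticeBall B (ρ ^ (r * (n : ℝ) / (k : ℝ))),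
            ρ ^ (1 - 2 * r * (n : ℝ) / (k : ℝ)) * frobNorm X ^ 2) /
          Real.log ρ)
      atTop (nhds (1 + r * (n : ℝ))) := by
  obtain ⟨c₁, hc₁, c₂, hc₂, M₀, hM₀1, hbd⟩ := key_bounds hk B hB
  have hkR : (0:ℝ) < (k:ℝ) := by exact_mod_cast hk
  have hnR : (1:ℝ) ≤ (n:ℝ) := by exact_mod_cast hn
  set b : ℝ := r * (n : ℝ) / (k : ℝ) with hbdef
  set a : ℝ := 1 - 2 * r * (n : ℝ) / (k : ℝ) with hadef
  have hb : 0 < b := by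
    rw [hbdef]
    positivity
  have hA : a + ((k:ℝ) + 2) * b = 1 + r * (n:ℝ) := by
    rw [hadef, hbdef]
    field_simp
    ring
  -- the two bounding functions
  have hlim : ∀ c : ℝ, Tendsto (fun ρ : ℝ => (a + ((k:ℝ)+2) * b) + Real.log c / Real.log ρ)
      atTop (nhds (1 + r * (n:ℝ))) := by
    intro c
    rw [← hA]
    have h1 : Tendsto (fun ρ : ℝ => Real.log c / Real.log ρ) atTop (nhds 0) := by
      simp only [div_eq_mul_inv]
      have := Real.tendsto_log_atTop.inv_tendsto_atTop
      simpa using this.const_mul (Real.log c)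
    simpa using tendsto_const_nhds.add h1
  refine tendsto_of_tendsto_of_tendsto_of_le_of_le' (hlim c₁) (hlim c₂) ?_ ?_
  all_goals {
    filter_upwards [(tendsto_rpow_atTop hb).eventually_ge_atTop M₀, eventually_gt_atTop (1:ℝ)]
      with ρ hρM hρ1
    have hρ0 : (0:ℝ) < ρ := lt_trans one_pos hρ1
    have hl : 0 < Real.log ρ := Real.log_pos hρ1
    obtain ⟨hfin, hlo, hhi⟩ := hbd _ hρM
    have hMpos : (0:ℝ) < ρ ^ b := Real.rpow_pos_of_pos hρ0 b
    set S : ℝ := ∑ᶠ X ∈ latticeBall B (ρ ^ b), frobNorm X ^ 2 with hSdef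
    have hSpos : 0 < S := lt_of_lt_of_le (by positivity) hlo
    have hfac : (∑ᶠ X ∈ latticeBall B (ρ ^ b), ρ ^ a * frobNorm X ^ 2) = ρ ^ a * S := by
      rw [hSdef, finsum_mem_eq_finite_toFinset_sum _ hfin,
        finsum_mem_eq_finite_toFinset_sum _ hfin, Finset.mul_sum]
    have hlogP : Real.log (∑ᶠ X ∈ latticeBall B (ρ ^ b), ρ ^ a * frobNorm X ^ 2)
        = a * Real.log ρ + Real.log S := by
      rw [hfac, Real.log_mul (ne_of_gt (Real.rpow_pos_of_pos hρ0 a)) (ne_of_gt hSpos),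
        Real.log_rpow hρ0]
    have hlogc : ∀ c : ℝ, 0 < c → Real.log (c * (ρ ^ b) ^ (k + 2))
        = Real.log c + ((k:ℝ)+2) * (b * Real.log ρ) := by
      intro c hc
      rw [Real.log_mul (ne_of_gt hc) (by positivity), Real.log_pow, Real.log_rpow hρ0]
      push_cast
      ring
    have hlogS_lo : Real.log c₁ + ((k:ℝ)+2) * (b * Real.log ρ) ≤ Real.log S := by
      rw [← hlogc c₁ hc₁]
      exact Real.log_le_log (by positivity) hlo
    have hlogS_hi : Real.log S ≤ Real.log c₂ + ((k:ℝ)+2) * (b * Real.log ρ) := by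
      rw [← hlogc c₂ hc₂]
      exact Real.log_le_log hSpos hhi
    rw [hlogP]
    first
    | · rw [le_div_iff₀ hl]
        have hexp : ((a + ((k:ℝ)+2) * b) + Real.log c₁ / Real.log ρ) * Real.log ρ
            = a * Real.log ρ + ((k:ℝ)+2) * (b * Real.log ρ) + Real.log c₁ := by
          field_simp
        rw [hexp]
        linarith
    | · rw [div_le_iff₀ hl]
        have hexp : ((a + ((k:ℝ)+2) * b) + Real.log c₂ / Real.log ρ) * Real.log ρ
            = a * Real.log ρ + ((k:ℝ)+2) * (b * Real.log ρ) + Real.log c₂ := by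
          field_simp
        rw [hexp]
        linarith
  }
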